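/- Let A and B be nonempty compact metric spaces and let h : A → B be a monotone map. Then for every connected subset C ⊆ B, the preimage h⁻¹(C) is a connected subset of A. -/
import Mathlib

/-- A continuous map between compact metric spaces is *monotone* if it is surjective
and every fiber is connected. For a monotone map, the preimage of any connected set
is connected. -/
theorem preimage_connected_of_monotone
    {A B : Type*} [MetricSpace A] [CompactSpace A] [Nonempty A]
    [MetricSpace B] [CompactSpace B] [Nonempty B]
    (h : A → B) (hcont : Continuous h) (hsurj : Function.Surjective h)
    (hfib : ∀ b : B, IsConnected (h ⁻¹' {b}))
    (C : Set B) (hC : IsConnected C) :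
    IsConnected (h ⁻¹' C) := by
  have hclosed : IsClosedMap h := hcont.isClosedMap
  refine ⟨hC.nonempty.preimage hsurj, ?_⟩
  intro u v hu hv hsub hnu hnv
  by_contra hempty
  rw [Set.not_nonempty_iff_eq_empty] at hempty
  -- each fiber over c ∈ C is contained in u or in v
  have fib_sub : ∀ c ∈ C, h ⁻¹' {c} ⊆ u ∨ h ⁻¹' {c} ⊆ v := by
    intro c hc
    have hfibsub : h ⁻¹' {c} ⊆ h ⁻¹' C := fun x hx => by
      simp only [Set.mem_preimage, Set.mem_singleton_iff] at hx
      simpa [Set.mem_preimage, hx] using hc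
    have hfsub : h ⁻¹' {c} ⊆ u ∪ v := hfibsub.trans hsub
    rcases (h ⁻¹' {c} ∩ u).eq_empty_or_nonempty with he | hne
    · right
      intro x hx
      rcases hfsub hx with hxu | hxv
      · exact (Set.eq_empty_iff_forall_notMem.1 he x ⟨hx, hxu⟩).elim
      · exact hxv
    · rcases (h ⁻¹' {c} ∩ v).eq_empty_or_nonempty with he' | hne'
      · left
        intro x hx
        rcases hfsub hx with hxu | hxv
        · exact hxu
        · exact (Set.eq_empty_iff_forall_notMem.1 he' x ⟨hx, hxv⟩).elim
      · obtain ⟨x, hx, hxu, hxv⟩ := (hfib c).2 u v hu hv hfsub hne hne'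
        exact absurd (Set.eq_empty_iff_forall_notMem.1 hempty x)
          (by simp [Set.mem_inter_iff, hfibsub hx, hxu, hxv])
  -- the open sets downstairs
  set Cu : Set B := (h '' uᶜ)ᶜ with hCu
  set Cv : Set B := (h '' vᶜ)ᶜ with hCv
  have hCuo : IsOpen Cu := (hclosed _ hu.isClosed_compl).isOpen_compl
  have hCvo : IsOpen Cv := (hclosed _ hv.isClosed_compl).isOpen_compl
  -- membership characterization
  have memCu : ∀ c : B, c ∈ Cu ↔ h ⁻¹' {c} ⊆ u := by
    intro c
    constructor
    · intro hcc x hx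
      by_contra hxu
      exact hcc ⟨x, hxu, by simpa using hx⟩
    · rintro hsu ⟨x, hxu, rfl⟩
      exact hxu (hsu rfl)
  have memCv : ∀ c : B, c ∈ Cv ↔ h ⁻¹' {c} ⊆ v := by
    intro c
    constructor
    · intro hcc x hx
      by_contra hxv
      exact hcc ⟨x, hxv, by simpa using hx⟩
    · rintro hsv ⟨x, hxv, rfl⟩
      exact hxv (hsv rfl)
  have hCsub : C ⊆ Cu ∪ Cv := by
    intro c hc
    rcases fib_sub c hc with hl | hr
    · exact Or.inl ((memCu c).2 hl)
    · exact Or.inr ((memCv c).2 hr)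
  have hCCu : (C ∩ Cu).Nonempty := by
    obtain ⟨x, hxC, hxu⟩ := hnu
    refine ⟨h x, hxC, (memCu _).2 ?_⟩
    rcases fib_sub (h x) hxC with hl | hr
    · exact hl
    · exact absurd (Set.eq_empty_iff_forall_notMem.1 hempty x)
        (by simp [Set.mem_inter_iff, hxC, hxu, hr rfl])
  have hCCv : (C ∩ Cv).Nonempty := by
    obtain ⟨x, hxC, hxv⟩ := hnv
    refine ⟨h x, hxC, (memCv _).2 ?_⟩
    rcases fib_sub (h x) hxC with hl | hr
    · exact absurd (Set.eq_empty_iff_forall_notMem.1 hempty x)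
        (by simp [Set.mem_inter_iff, hxC, hxv, hl rfl])
    · exact hr
  obtain ⟨c, hcC, hcu, hcv⟩ := hC.2 Cu Cv hCuo hCvo hCsub hCCu hCCv
  obtain ⟨x, hx⟩ := hsurj c
  have : x ∈ h ⁻¹' C ∩ (u ∩ v) :=
    ⟨by simpa [Set.mem_preimage, hx] using hcC,
      (memCu c).1 hcu (by simp [hx]), (memCv c).1 hcv (by simp [hx])⟩
  exact (Set.eq_empty_iff_forall_notMem.1 hempty x) this
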